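/- Let G be a proper étale Hausdorff groupoid with compact orbit space acting affinely on a locally compact space Y over G^(0) whose anchor map p : Y → G^(0) admits a continuous (not necessarily equivariant) section s, and whose fibres Y_u are convex. Then there exists a continuous G-equivariant section s̃ : G^(0) → Y of p, namely s̃(u) = Σ_{k ∈ G^u} c(d(k)) · (k · s(d(k))) where c is a compactly supported cutoff function for G; consequently p is a G-equivariant homotopy equivalence between Y and G^(0). -/

import Mathlib

open MeasureTheory Topology Filter
open scoped ENNReal

universe u v

/-- A locally compact Hausdorff groupoid, modelled as a type `G` with a partially
defined multiplication (via the composability predicate `Comp`), an inversion,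
and continuity of the structure maps. -/
structure TopGroupoid (G : Type u) [TopologicalSpace G] where
  mul : G → G → G
  inv : G → G
  Comp : G → G → Prop
  inv_inv : ∀ g, inv (inv g) = g
  comp_inv : ∀ g, Comp g (inv g)
  comp_iff : ∀ g h, Comp g h ↔ mul (inv g) g = mul h (inv h)
  assoc : ∀ g₁ g₂ g₃, Comp g₁ g₂ → Comp g₂ g₃ →
    Comp (mul g₁ g₂) g₃ ∧ Comp g₁ (mul g₂ g₃) ∧
      mul (mul g₁ g₂) g₃ = mul g₁ (mul g₂ g₃)
  inv_mul_cancel_left : ∀ g h, Comp g h → mul (inv g) (mul g h) = h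
  mul_inv_cancel_right : ∀ g h, Comp g h → mul (mul g h) (inv h) = g
  dmul : ∀ g h, Comp g h → mul (inv (mul g h)) (mul g h) = mul (inv h) h
  rmul : ∀ g h, Comp g h → mul (mul g h) (inv (mul g h)) = mul g (inv g)
  continuous_inv : Continuous inv
  continuous_mul : Continuous fun p : {p : G × G // Comp p.1 p.2} => mul p.1.1 p.1.2

namespace TopGroupoid

variable {G : Type u} [TopologicalSpace G] (𝒢 : TopGroupoid G)

/-- The domain map `d(g) = g⁻¹ g`. -/
def d (g : G) : G := 𝒢.mul (𝒢.inv g) g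

/-- The range map `r(g) = g g⁻¹`. -/
def r (g : G) : G := 𝒢.mul g (𝒢.inv g)

/-- The unit space `G⁽⁰⁾ = {g | g = g⁻¹ = g²}`. -/
def units : Set G := {g | 𝒢.inv g = g ∧ 𝒢.mul g g = g}

theorem comp_iff' (g h : G) : 𝒢.Comp g h ↔ 𝒢.d g = 𝒢.r h := 𝒢.comp_iff g h

theorem d_inv (g : G) : 𝒢.d (𝒢.inv g) = 𝒢.r g := by
  simp only [d, r, 𝒢.inv_inv]

theorem r_inv (g : G) : 𝒢.r (𝒢.inv g) = 𝒢.d g := by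
  simp only [d, r, 𝒢.inv_inv]

theorem d_mul {g h : G} (hc : 𝒢.Comp g h) : 𝒢.d (𝒢.mul g h) = 𝒢.d h := 𝒢.dmul g h hc

theorem r_mul {g h : G} (hc : 𝒢.Comp g h) : 𝒢.r (𝒢.mul g h) = 𝒢.r g := 𝒢.rmul g h hc

theorem comp_inv_right {g h : G} (hd : 𝒢.d g = 𝒢.d h) : 𝒢.Comp g (𝒢.inv h) := by
  rw [𝒢.comp_iff', 𝒢.r_inv]; exact hd

theorem comp_inv_left {g h : G} (hr : 𝒢.r g = 𝒢.r h) : 𝒢.Comp (𝒢.inv g) h := by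
  rw [𝒢.comp_iff', 𝒢.d_inv]; exact hr

/-- `G` is étale if the domain map is a local homeomorphism. -/
def Etale : Prop := IsLocalHomeomorph 𝒢.d

/-- An open bisection: an open set on which both `d` and `r` restrict to
homeomorphisms onto open subsets. -/
def IsBisection (U : Set G) : Prop :=
  IsOpen U ∧ IsOpenEmbedding (U.restrict 𝒢.d) ∧ IsOpenEmbedding (U.restrict 𝒢.r)

/-- `G` is ample if the compact open bisections form a basis of the topology. -/
def Ample : Prop :=
  TopologicalSpace.IsTopologicalBasis {U : Set G | 𝒢.IsBisection U ∧ IsCompact U}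

/-- A subgroupoid: a subset closed under inversion and (composable) products. -/
def IsSubgroupoid (H : Set G) : Prop :=
  (∀ g ∈ H, 𝒢.inv g ∈ H) ∧ ∀ g h, g ∈ H → h ∈ H → 𝒢.Comp g h → 𝒢.mul g h ∈ H

end TopGroupoid


namespace TopGroupoidAux

open TopGroupoid Set

variable {G : Type u} [TopologicalSpace G] (𝒢 : TopGroupoid G)

lemma comp_inv_self (g : G) : 𝒢.Comp (𝒢.inv g) g := 𝒢.comp_inv_left rfl

lemma d_def (g : G) : 𝒢.d g = 𝒢.mul (𝒢.inv g) g := rfl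
lemma r_def (g : G) : 𝒢.r g = 𝒢.mul g (𝒢.inv g) := rfl

lemma mul_d_self (g : G) : 𝒢.mul g (𝒢.d g) = g := by
  have h := 𝒢.inv_mul_cancel_left (𝒢.inv g) g (comp_inv_self 𝒢 g)
  rwa [𝒢.inv_inv] at h

lemma d_unit (g : G) : 𝒢.d g ∈ 𝒢.units := by
  have hcomp : 𝒢.Comp (𝒢.inv g) g := comp_inv_self 𝒢 g
  have hdu : 𝒢.d (𝒢.d g) = 𝒢.d g := 𝒢.d_mul hcomp
  have hru : 𝒢.r (𝒢.d g) = 𝒢.d g := by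
    have := 𝒢.r_mul hcomp
    rwa [𝒢.r_inv] at this
  have h2 : 𝒢.mul (𝒢.d g) (𝒢.inv g) = 𝒢.inv g :=
    𝒢.mul_inv_cancel_right (𝒢.inv g) g hcomp
  have hcompu : 𝒢.Comp (𝒢.d g) (𝒢.inv g) := by
    rw [𝒢.comp_iff', hdu, 𝒢.r_inv]
  have h3 : 𝒢.mul (𝒢.d g) (𝒢.d g) = 𝒢.d g := by
    obtain ⟨-, -, h⟩ := 𝒢.assoc (𝒢.d g) (𝒢.inv g) g hcompu hcomp
    rw [h2] at h
    exact h.symm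
  have h4 : 𝒢.inv (𝒢.d g) = 𝒢.d g := by
    have h5 := 𝒢.inv_mul_cancel_left (𝒢.d g) (𝒢.inv (𝒢.d g)) (𝒢.comp_inv (𝒢.d g))
    have hr' : 𝒢.mul (𝒢.d g) (𝒢.inv (𝒢.d g)) = 𝒢.d g := hru
    rw [hr'] at h5
    have h6 : 𝒢.mul (𝒢.inv (𝒢.d g)) (𝒢.d g) = 𝒢.d g := hdu
    rw [h5] at h6
    exact h6
  exact ⟨h4, h3⟩

lemma r_unit (g : G) : 𝒢.r g ∈ 𝒢.units := by
  rw [← 𝒢.d_inv]; exact d_unit 𝒢 (𝒢.inv g)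

lemma d_of_unit {u : G} (hu : u ∈ 𝒢.units) : 𝒢.d u = u := by
  rw [d_def, hu.1, hu.2]

lemma r_of_unit {u : G} (hu : u ∈ 𝒢.units) : 𝒢.r u = u := by
  rw [r_def, hu.1, hu.2]

lemma continuous_d : Continuous 𝒢.d := by
  have : Continuous fun g : G => (⟨(𝒢.inv g, g), comp_inv_self 𝒢 g⟩ :
      {p : G × G // 𝒢.Comp p.1 p.2}) :=
    Continuous.subtype_mk (𝒢.continuous_inv.prodMk continuous_id) _
  exact 𝒢.continuous_mul.comp this

/-- inversion as a homeomorphism -/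
def invHomeo : G ≃ₜ G where
  toFun := 𝒢.inv
  invFun := 𝒢.inv
  left_inv := 𝒢.inv_inv
  right_inv := 𝒢.inv_inv
  continuous_toFun := 𝒢.continuous_inv
  continuous_invFun := 𝒢.continuous_inv

lemma r_eq_d_inv : 𝒢.r = 𝒢.d ∘ 𝒢.inv := by
  funext g; exact (𝒢.d_inv g).symm

lemma continuous_r : Continuous 𝒢.r := by
  rw [r_eq_d_inv 𝒢]; exact (continuous_d 𝒢).comp 𝒢.continuous_inv

lemma isLocalHomeomorph_r (hEt : 𝒢.Etale) : IsLocalHomeomorph 𝒢.r := by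
  rw [r_eq_d_inv 𝒢]
  exact hEt.comp (invHomeo 𝒢).isLocalHomeomorph

/-- fibers of a local homeomorphism intersected with compact sets are finite -/
lemma fiber_compact_finite [T2Space G] {f : G → G} (hf : IsLocalHomeomorph f)
    {C : Set G} (hC : IsCompact C) (u : G) : ({k | f k = u} ∩ C).Finite := by
  have hclosed : IsClosed {k | f k = u} := isClosed_eq hf.continuous continuous_const
  have hcpt : IsCompact ({k | f k = u} ∩ C) := hC.inter_left hclosed
  refine hcpt.finite ?_
  rw [isDiscrete_iff_discreteTopology, discreteTopology_iff_isOpen_singleton]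
  rintro ⟨x, hxf, hxC⟩
  obtain ⟨e, hxe, rfl⟩ := hf x
  refine isOpen_induced_iff.mpr ⟨e.source, e.open_source, ?_⟩
  ext ⟨y, hyf, hyC⟩
  simp only [Set.mem_preimage, Set.mem_singleton_iff, Subtype.mk_eq_mk, Subtype.ext_iff]
  constructor
  · intro hy
    exact e.injOn hy hxe ((show (e : G → G) y = u from hyf).trans
      (show (e : G → G) x = u from hxf).symm)
  · rintro rfl; exact hxe

end TopGroupoidAux
namespace TopGroupoidAux

variable {G : Type u} [TopologicalSpace G] (𝒢 : TopGroupoid G)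
variable {V : Type v} [AddCommGroup V] [Module ℝ V]

lemma convex_fiber (Y : Set (G × V))
    (hconv : ∀ u v w, (u, v) ∈ Y → (u, w) ∈ Y → ∀ a : ℝ, 0 ≤ a → a ≤ 1 →
      (u, a • v + (1 - a) • w) ∈ Y) (u : G) : Convex ℝ {v | (u, v) ∈ Y} := by
  intro x hx y hy a b ha hb hab
  have hb' : b = 1 - a := by linarith
  subst hb'
  exact hconv u x y hx hy a ha (by linarith)

lemma conv_sum_mem (Y : Set (G × V))
    (hconv : ∀ u v w, (u, v) ∈ Y → (u, w) ∈ Y → ∀ a : ℝ, 0 ≤ a → a ≤ 1 →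
      (u, a • v + (1 - a) • w) ∈ Y) (u : G)
    {ι : Type*} (t : Finset ι) (a : ι → ℝ) (v : ι → V)
    (h0 : ∀ i ∈ t, 0 ≤ a i) (h1 : ∑ i ∈ t, a i = 1)
    (hv : ∀ i ∈ t, (u, v i) ∈ Y) :
    (u, ∑ i ∈ t, a i • v i) ∈ Y :=
  (convex_fiber Y hconv u).sum_mem h0 h1 hv

lemma act_sum (Y : Set (G × V)) (act : G → V → V)
    (hconv : ∀ u v w, (u, v) ∈ Y → (u, w) ∈ Y → ∀ a : ℝ, 0 ≤ a → a ≤ 1 →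
      (u, a • v + (1 - a) • w) ∈ Y)
    (haffine : ∀ g v w, (𝒢.d g, v) ∈ Y → (𝒢.d g, w) ∈ Y → ∀ a : ℝ, 0 ≤ a → a ≤ 1 →
      act g (a • v + (1 - a) • w) = a • act g v + (1 - a) • act g w)
    (g : G) {ι : Type*} (t : Finset ι) (a : ι → ℝ) (v : ι → V)
    (h0 : ∀ i ∈ t, 0 ≤ a i) (h1 : ∑ i ∈ t, a i = 1)
    (hv : ∀ i ∈ t, (𝒢.d g, v i) ∈ Y) :
    act g (∑ i ∈ t, a i • v i) = ∑ i ∈ t, a i • act g (v i) := by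
  classical
  induction t using Finset.induction_on generalizing a with
  | empty => simp at h1
  | @insert i t hit IH =>
    simp only [Finset.sum_insert hit] at h1 ⊢
    have h0i : 0 ≤ a i := h0 i (Finset.mem_insert_self i t)
    have h0t : ∀ j ∈ t, 0 ≤ a j := fun j hj => h0 j (Finset.mem_insert_of_mem hj)
    have hvi : (𝒢.d g, v i) ∈ Y := hv i (Finset.mem_insert_self i t)
    have hvt : ∀ j ∈ t, (𝒢.d g, v j) ∈ Y := fun j hj => hv j (Finset.mem_insert_of_mem hj)
    set b : ℝ := ∑ j ∈ t, a j with hb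
    have hb0 : 0 ≤ b := Finset.sum_nonneg h0t
    rcases eq_or_lt_of_le hb0 with hb0' | hb0'
    · -- all coefficients in t vanish
      have hz : ∀ j ∈ t, a j = 0 :=
        (Finset.sum_eq_zero_iff_of_nonneg h0t).mp hb0'.symm
      have hai : a i = 1 := by
        have : b = 0 := hb0'.symm
        linarith
      have hsz : ∑ j ∈ t, a j • v j = 0 :=
        Finset.sum_eq_zero fun j hj => by rw [hz j hj, zero_smul]
      have hsz' : ∑ j ∈ t, a j • act g (v j) = 0 :=
        Finset.sum_eq_zero fun j hj => by rw [hz j hj, zero_smul]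
      rw [hsz, hsz', hai, one_smul, one_smul, add_zero, add_zero]
    · -- normalize
      set a' : ι → ℝ := fun j => a j / b with ha'
      have h0' : ∀ j ∈ t, 0 ≤ a' j := fun j hj => div_nonneg (h0t j hj) hb0
      have h1' : ∑ j ∈ t, a' j = 1 := by
        rw [← Finset.sum_div, ← hb, div_self hb0'.ne']
      have hw := IH a' h0' h1' hvt
      set w : V := ∑ j ∈ t, a' j • v j with hwdef
      have hwmem : (𝒢.d g, w) ∈ Y := conv_sum_mem Y hconv _ t a' v h0' h1' hvt
      have hbw : ∑ j ∈ t, a j • v j = b • w := by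
        rw [hwdef, Finset.smul_sum]
        refine Finset.sum_congr rfl fun j hj => ?_
        rw [ha', smul_smul, mul_div_cancel₀ _ hb0'.ne']
      have hbw' : ∑ j ∈ t, a j • act g (v j) = b • ∑ j ∈ t, a' j • act g (v j) := by
        rw [Finset.smul_sum]
        refine Finset.sum_congr rfl fun j hj => ?_
        rw [ha', smul_smul, mul_div_cancel₀ _ hb0'.ne']
      have hba : b = 1 - a i := by linarith
      have hai1 : a i ≤ 1 := by linarith
      rw [hbw, hbw', ← hw, hba]
      exact haffine g (v i) w hvi hwmem (a i) h0i hai1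

end TopGroupoidAux
namespace TopGroupoidAux

open Set

section Finiteness

variable {G : Type u} [TopologicalSpace G] [T2Space G] (𝒢 : TopGroupoid G)

/-- arrows with range in a compact set of units and domain in the support of the
cutoff lie in a fixed compact set -/
lemma support_fiber_subset_compact
    (hProper : ∀ K : Set G, K ⊆ 𝒢.units → IsCompact K →
      IsCompact (𝒢.d ⁻¹' K ∩ 𝒢.r ⁻¹' K))
    {c : G → ℝ} (hsupp : HasCompactSupport c) {N : Set G} (hN : IsCompact N) :
    ∃ C : Set G, IsCompact C ∧
      ∀ k, 𝒢.r k ∈ N → 𝒢.d k ∈ tsupport c → k ∈ C := by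
  set K : Set G := 𝒢.d '' tsupport c ∪ 𝒢.d '' N with hK
  have hKc : IsCompact K :=
    (hsupp.image (continuous_d 𝒢)).union (hN.image (continuous_d 𝒢))
  have hKu : K ⊆ 𝒢.units := by
    rintro x (⟨g, -, rfl⟩ | ⟨g, -, rfl⟩) <;> exact d_unit 𝒢 g
  refine ⟨𝒢.d ⁻¹' K ∩ 𝒢.r ⁻¹' K, hProper K hKu hKc, fun k hrk hdk => ?_⟩
  constructor
  · exact Or.inl ⟨𝒢.d k, hdk, d_of_unit 𝒢 (d_unit 𝒢 k)⟩
  · refine Or.inr ⟨𝒢.r k, hrk, ?_⟩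
    rw [← 𝒢.d_inv, d_of_unit 𝒢 (d_unit 𝒢 (𝒢.inv k)), 𝒢.d_inv]

lemma fiber_tsupport_finite (hEt : 𝒢.Etale)
    (hProper : ∀ K : Set G, K ⊆ 𝒢.units → IsCompact K →
      IsCompact (𝒢.d ⁻¹' K ∩ 𝒢.r ⁻¹' K))
    {c : G → ℝ} (hsupp : HasCompactSupport c) (u : G) :
    {k | 𝒢.r k = u ∧ 𝒢.d k ∈ tsupport c}.Finite := by
  obtain ⟨C, hCc, hC⟩ := support_fiber_subset_compact 𝒢 hProper hsupp
    (isCompact_singleton (x := u))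
  refine (fiber_compact_finite (isLocalHomeomorph_r 𝒢 hEt) hCc u).subset ?_
  rintro k ⟨hk1, hk2⟩
  exact ⟨hk1, hC k (by rw [hk1]; exact rfl) hk2⟩

variable {M : Type*} [AddCommMonoid M]

/-- replace the finsum over the `r`-fibre by a finite sum over the `tsupport` part. -/
lemma finsum_fiber_eq (hEt : 𝒢.Etale)
    (hProper : ∀ K : Set G, K ⊆ 𝒢.units → IsCompact K →
      IsCompact (𝒢.d ⁻¹' K ∩ 𝒢.r ⁻¹' K))
    {c : G → ℝ} (hsupp : HasCompactSupport c) (u : G)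
    (f : G → M) (hf : ∀ k, f k ≠ 0 → 𝒢.d k ∈ tsupport c) :
    ∑ᶠ k ∈ {k | 𝒢.r k = u}, f k
      = ∑ k ∈ (fiber_tsupport_finite 𝒢 hEt hProper hsupp u).toFinset, f k := by
  refine finsum_mem_eq_sum_of_inter_support_eq f ?_
  ext k
  simp only [Set.mem_inter_iff, Set.mem_setOf_eq, Set.Finite.coe_toFinset,
    Function.mem_support]
  constructor
  · rintro ⟨hr, hk⟩; exact ⟨⟨hr, hf k hk⟩, hk⟩
  · rintro ⟨⟨hr, -⟩, hk⟩; exact ⟨hr, hk⟩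

end Finiteness

end TopGroupoidAux
/-- The canonical equivariant section built from a cutoff function:
`s̃(u) = Σ_{k ∈ G^u} c(d k) • (k · s(d k))`. -/
noncomputable def tildeS {G : Type u} [TopologicalSpace G] (𝒢 : TopGroupoid G)
    {V : Type v} [AddCommGroup V] [Module ℝ V]
    (act : G → V → V) (c : G → ℝ) (s : G → V) (u : G) : V :=
  ∑ᶠ k ∈ {k : G | 𝒢.r k = u}, c (𝒢.d k) • act k (s (𝒢.d k))

namespace TopGroupoidAux

open Set

variable {G : Type u} [TopologicalSpace G] [T2Space G]
    {V : Type v} [AddCommGroup V] [Module ℝ V]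

/-- abbreviation for the relevant finite subset of the fibre -/
noncomputable def fiberT (𝒢 : TopGroupoid G) (hEt : 𝒢.Etale)
    (hProper : ∀ K : Set G, K ⊆ 𝒢.units → IsCompact K →
      IsCompact (𝒢.d ⁻¹' K ∩ 𝒢.r ⁻¹' K))
    {c : G → ℝ} (hsupp : HasCompactSupport c) (u : G) : Finset G :=
  (fiber_tsupport_finite 𝒢 hEt hProper hsupp u).toFinset

variable (𝒢 : TopGroupoid G) (hEt : 𝒢.Etale)
    (hProper : ∀ K : Set G, K ⊆ 𝒢.units → IsCompact K →
      IsCompact (𝒢.d ⁻¹' K ∩ 𝒢.r ⁻¹' K))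
    {c : G → ℝ}

lemma mem_fiberT (hsupp : HasCompactSupport c) {u k : G} :
    k ∈ fiberT 𝒢 hEt hProper hsupp u ↔ 𝒢.r k = u ∧ 𝒢.d k ∈ tsupport c := by
  simp [fiberT, Set.Finite.mem_toFinset]

lemma sum_c_fiberT (hsupp : HasCompactSupport c)
    (hsum : ∀ u ∈ 𝒢.units, ∑ᶠ k ∈ {k : G | 𝒢.r k = u}, c (𝒢.d k) = 1)
    {u : G} (hu : u ∈ 𝒢.units) :
    ∑ k ∈ fiberT 𝒢 hEt hProper hsupp u, c (𝒢.d k) = 1 := by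
  unfold fiberT
  rw [← finsum_fiber_eq 𝒢 hEt hProper hsupp u (fun k => c (𝒢.d k))
    (fun k hk => subset_closure hk)]
  exact hsum u hu

lemma tildeS_eq_sum (act : G → V → V) (hsupp : HasCompactSupport c) (s : G → V) (u : G) :
    tildeS 𝒢 act c s u
      = ∑ k ∈ fiberT 𝒢 hEt hProper hsupp u, c (𝒢.d k) • act k (s (𝒢.d k)) := by
  unfold fiberT
  refine finsum_fiber_eq 𝒢 hEt hProper hsupp u _ fun k hk => subset_closure ?_
  intro h
  exact hk (by rw [h, zero_smul])

variable {Y : Set (G × V)} {act : G → V → V} {s : G → V}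

include hEt hProper

lemma tildeS_mem
    (hconv : ∀ u v w, (u, v) ∈ Y → (u, w) ∈ Y → ∀ a : ℝ, 0 ≤ a → a ≤ 1 →
      (u, a • v + (1 - a) • w) ∈ Y)
    (hact_mem : ∀ g v, (𝒢.d g, v) ∈ Y → (𝒢.r g, act g v) ∈ Y)
    (hc0 : ∀ u, 0 ≤ c u) (hsupp : HasCompactSupport c)
    (hsum : ∀ u ∈ 𝒢.units, ∑ᶠ k ∈ {k : G | 𝒢.r k = u}, c (𝒢.d k) = 1)
    (hs_mem : ∀ u ∈ 𝒢.units, (u, s u) ∈ Y)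
    {u : G} (hu : u ∈ 𝒢.units) : (u, tildeS 𝒢 act c s u) ∈ Y := by
  rw [tildeS_eq_sum 𝒢 hEt hProper act hsupp s]
  refine conv_sum_mem Y hconv u _ _ _ (fun k _ => hc0 _)
    (sum_c_fiberT 𝒢 hEt hProper hsupp hsum hu) fun k hk => ?_
  obtain ⟨hrk, -⟩ := (mem_fiberT 𝒢 hEt hProper hsupp).mp hk
  rw [← hrk]
  exact hact_mem k (s (𝒢.d k)) (hs_mem (𝒢.d k) (d_unit 𝒢 k))

lemma tildeS_equivariant
    (hconv : ∀ u v w, (u, v) ∈ Y → (u, w) ∈ Y → ∀ a : ℝ, 0 ≤ a → a ≤ 1 →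
      (u, a • v + (1 - a) • w) ∈ Y)
    (hact_mem : ∀ g v, (𝒢.d g, v) ∈ Y → (𝒢.r g, act g v) ∈ Y)
    (hact_mul : ∀ g h v, 𝒢.Comp g h → (𝒢.d h, v) ∈ Y →
      act (𝒢.mul g h) v = act g (act h v))
    (haffine : ∀ g v w, (𝒢.d g, v) ∈ Y → (𝒢.d g, w) ∈ Y → ∀ a : ℝ, 0 ≤ a → a ≤ 1 →
      act g (a • v + (1 - a) • w) = a • act g v + (1 - a) • act g w)
    (hc0 : ∀ u, 0 ≤ c u) (hsupp : HasCompactSupport c)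
    (hsum : ∀ u ∈ 𝒢.units, ∑ᶠ k ∈ {k : G | 𝒢.r k = u}, c (𝒢.d k) = 1)
    (hs_mem : ∀ u ∈ 𝒢.units, (u, s u) ∈ Y)
    (g : G) :
    tildeS 𝒢 act c s (𝒢.r g) = act g (tildeS 𝒢 act c s (𝒢.d g)) := by
  have hcompk : ∀ k : G, 𝒢.r k = 𝒢.d g → 𝒢.Comp g k := fun k hk =>
    (𝒢.comp_iff' g k).mpr hk.symm
  -- step 1: act g of the finite-sum expression of tildeS (d g)
  have h1 : act g (tildeS 𝒢 act c s (𝒢.d g))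
      = ∑ k ∈ fiberT 𝒢 hEt hProper hsupp (𝒢.d g),
          c (𝒢.d k) • act g (act k (s (𝒢.d k))) := by
    rw [tildeS_eq_sum 𝒢 hEt hProper act hsupp s]
    refine act_sum 𝒢 Y act hconv haffine g _ _ _ (fun k _ => hc0 _)
      (sum_c_fiberT 𝒢 hEt hProper hsupp hsum (d_unit 𝒢 g)) fun k hk => ?_
    obtain ⟨hrk, -⟩ := (mem_fiberT 𝒢 hEt hProper hsupp).mp hk
    rw [← hrk]
    exact hact_mem k (s (𝒢.d k)) (hs_mem (𝒢.d k) (d_unit 𝒢 k))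
  -- step 2: back to a finsum over the fibre of `d g`
  have h2 : ∑ k ∈ fiberT 𝒢 hEt hProper hsupp (𝒢.d g),
        c (𝒢.d k) • act g (act k (s (𝒢.d k)))
      = ∑ᶠ k ∈ {k : G | 𝒢.r k = 𝒢.d g}, c (𝒢.d k) • act g (act k (s (𝒢.d k))) := by
    unfold fiberT
    refine (finsum_fiber_eq 𝒢 hEt hProper hsupp _ _ fun k hk => subset_closure ?_).symm
    intro h
    exact hk (by rw [h, zero_smul])
  -- step 3: transport along the bijection k ↦ g k
  have h3 : ∑ᶠ k ∈ {k : G | 𝒢.r k = 𝒢.d g}, c (𝒢.d k) • act g (act k (s (𝒢.d k)))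
      = tildeS 𝒢 act c s (𝒢.r g) := by
    refine finsum_mem_eq_of_bijOn (fun k => 𝒢.mul g k) ⟨?_, ?_, ?_⟩ ?_
    · intro k hk
      exact 𝒢.r_mul (hcompk k hk)
    · intro k hk k' hk' h
      have e1 := 𝒢.inv_mul_cancel_left g k (hcompk k hk)
      have e2 := 𝒢.inv_mul_cancel_left g k' (hcompk k' hk')
      rw [← e1, ← e2]
      exact congrArg (𝒢.mul (𝒢.inv g)) h
    · intro k' hk'
      have hc' : 𝒢.Comp (𝒢.inv g) k' := by
        rw [𝒢.comp_iff', 𝒢.d_inv]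
        exact hk'.symm
      refine ⟨𝒢.mul (𝒢.inv g) k', ?_, ?_⟩
      · show 𝒢.r _ = 𝒢.d g
        rw [𝒢.r_mul hc', 𝒢.r_inv]
      · have := 𝒢.inv_mul_cancel_left (𝒢.inv g) k' hc'
        rwa [𝒢.inv_inv] at this
    · intro k hk
      have hck := hcompk k hk
      rw [𝒢.d_mul hck,
        hact_mul g k (s (𝒢.d k)) hck (hs_mem (𝒢.d k) (d_unit 𝒢 k))]
  rw [h1, h2, h3]

end TopGroupoidAux
namespace TopGroupoidAux

open Set Topology Filter

variable {G : Type u} [TopologicalSpace G] [T2Space G] [LocallyCompactSpace G]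
    {V : Type v} [AddCommGroup V] [Module ℝ V] [TopologicalSpace V]
    [IsTopologicalAddGroup V] [ContinuousSMul ℝ V]

lemma tildeS_continuousOn (𝒢 : TopGroupoid G) (hEt : 𝒢.Etale)
    (hProper : ∀ K : Set G, K ⊆ 𝒢.units → IsCompact K →
      IsCompact (𝒢.d ⁻¹' K ∩ 𝒢.r ⁻¹' K))
    {Y : Set (G × V)} {act : G → V → V} {c : G → ℝ} {s : G → V}
    (hact_cont : ContinuousOn (fun q : G × V => act q.1 q.2)
      {q : G × V | (𝒢.d q.1, q.2) ∈ Y})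
    (hc : Continuous c) (hsupp : HasCompactSupport c)
    (hs_cont : ContinuousOn s 𝒢.units)
    (hs_mem : ∀ u ∈ 𝒢.units, (u, s u) ∈ Y) :
    ContinuousOn (tildeS 𝒢 act c s) 𝒢.units := by
  classical
  intro u₀ hu₀
  suffices h : ContinuousAt (tildeS 𝒢 act c s) u₀ from h.continuousWithinAt
  obtain ⟨N, hNc, hNn⟩ := exists_compact_mem_nhds u₀
  obtain ⟨C₀, hC₀c, hC₀⟩ := support_fiber_subset_compact 𝒢 hProper hsupp hNc
  set C : Set G := C₀ ∩ 𝒢.d ⁻¹' tsupport c with hCdef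
  have hCc : IsCompact C :=
    hC₀c.inter_right (isClosed_closure.preimage (continuous_d 𝒢))
  have hCmem : ∀ k, 𝒢.r k ∈ N → 𝒢.d k ∈ tsupport c → k ∈ C := fun k h1 h2 =>
    ⟨hC₀ k h1 h2, h2⟩
  set T : Finset G := fiberT 𝒢 hEt hProper hsupp u₀ with hTdef
  have hT : ∀ k, k ∈ T ↔ (𝒢.r k = u₀ ∧ 𝒢.d k ∈ tsupport c) := fun k =>
    mem_fiberT 𝒢 hEt hProper hsupp
  -- pairwise disjoint open sets around the points of T
  obtain ⟨Vs, hVs, hVd⟩ := T.finite_toSet.t2_separation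
  -- local inverses of r
  choose e hke her using isLocalHomeomorph_r 𝒢 hEt
  set U : G → Set G := fun k => Vs k ∩ (e k).source with hUdef
  have hUopen : ∀ k, IsOpen (U k) := fun k => (hVs k).2.inter (e k).open_source
  have hkU : ∀ k, k ∈ U k := fun k => ⟨(hVs k).1, hke k⟩
  have hUsub : ∀ k, U k ⊆ (e k).source := fun k => inter_subset_right
  set O : G → Set G := fun k => (e k) '' (U k) with hOdef
  have hOopen : ∀ k, IsOpen (O k) :=
    fun k => (e k).isOpen_image_of_subset_source (hUopen k) (hUsub k)
  have hOsub : ∀ k, O k ⊆ (e k).target := fun k =>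
    (image_mono (hUsub k)).trans (by rw [(e k).image_source_eq_target])
  have hrk_eq : ∀ k x, 𝒢.r x = (e k) x := fun k x => congrFun (her k) x
  have hu₀O : ∀ k ∈ T, u₀ ∈ O k := by
    intro k hk
    exact ⟨k, hkU k, ((hrk_eq k k).symm.trans ((hT k).mp hk).1)⟩
  set σ : G → G → G := fun k => (e k).symm with hσdef
  have hσU : ∀ k, ∀ u ∈ O k, σ k u ∈ U k := by
    rintro k u ⟨y, hy, rfl⟩
    show (e k).symm ((e k) y) ∈ U k
    rwa [(e k).left_inv (hUsub k hy)]
  have hrσ : ∀ k, ∀ u ∈ O k, 𝒢.r (σ k u) = u := by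
    intro k u hu
    show 𝒢.r ((e k).symm u) = u
    rw [hrk_eq k, (e k).right_inv (hOsub k hu)]
  have hσr : ∀ k, ∀ y ∈ U k, σ k (𝒢.r y) = y := by
    intro k y hy
    show (e k).symm (𝒢.r y) = y
    rw [hrk_eq k]
    exact (e k).left_inv (hUsub k hy)
  -- the bad set
  set A : Set G := C \ ⋃ k ∈ T, U k with hAdef
  have hAc : IsCompact A := hCc.diff (isOpen_biUnion fun k _ => hUopen k)
  have hu₀A : u₀ ∉ 𝒢.r '' A := by
    rintro ⟨a, ⟨haC, haU⟩, hra⟩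
    refine haU (mem_biUnion ?_ (hkU a))
    exact (hT a).mpr ⟨hra, haC.2⟩
  -- the neighbourhood W
  set W : Set G := interior N ∩ (𝒢.r '' A)ᶜ ∩ ⋂ k ∈ T, O k with hWdef
  have hWopen : IsOpen W := by
    refine (isOpen_interior.inter ?_).inter (isOpen_biInter_finset fun k _ => hOopen k)
    exact (hAc.image (continuous_r 𝒢)).isClosed.isOpen_compl
  have hu₀W : u₀ ∈ W :=
    ⟨⟨mem_interior_iff_mem_nhds.mpr hNn, hu₀A⟩, mem_biInter hu₀O⟩
  have hWO : ∀ k ∈ T, W ⊆ O k := fun k hk u hu => by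
    exact mem_iInter₂.mp hu.2 k hk
  -- the term function
  set f : G → V := fun k => c (𝒢.d k) • act k (s (𝒢.d k)) with hfdef
  have hfsupp : ∀ k, f k ≠ 0 → 𝒢.d k ∈ tsupport c := by
    intro k hk
    refine subset_closure (fun h => hk ?_)
    rw [hfdef]; simp only [h, zero_smul]
  -- the key local formula
  have key : ∀ u ∈ W, tildeS 𝒢 act c s u = ∑ k ∈ T, f (σ k u) := by
    intro u hu
    obtain ⟨⟨huN, huA⟩, huO⟩ := hu
    have himg : {k | 𝒢.r k = u} ∩ Function.support f
        = ↑(T.image fun k => σ k u) ∩ Function.support f := by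
      ext k
      simp only [mem_inter_iff, mem_setOf_eq, Finset.coe_image, mem_image,
        Finset.mem_coe, Function.mem_support]
      constructor
      · rintro ⟨hrk, hfk⟩
        have hdk : 𝒢.d k ∈ tsupport c := hfsupp k hfk
        have hkC : k ∈ C := hCmem k (by rw [hrk]; exact interior_subset huN) hdk
        have hkB : k ∈ ⋃ j ∈ T, U j := by
          by_contra hkB
          exact huA ⟨k, ⟨hkC, hkB⟩, hrk⟩
        obtain ⟨j, hj, hkUj⟩ := mem_iUnion₂.mp hkB
        refine ⟨⟨j, hj, ?_⟩, hfk⟩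
        rw [← hrk]
        exact hσr j k hkUj
      · rintro ⟨⟨j, hj, rfl⟩, hfk⟩
        exact ⟨hrσ j u (hWO j hj ⟨⟨huN, huA⟩, huO⟩), hfk⟩
    have : tildeS 𝒢 act c s u = ∑ᶠ k ∈ {k : G | 𝒢.r k = u}, f k := rfl
    rw [this, finsum_mem_eq_sum_of_inter_support_eq f himg]
    refine Finset.sum_image ?_
    intro x hx y hy hxy
    by_contra hne
    have hd := hVd (Finset.mem_coe.mpr hx) (Finset.mem_coe.mpr hy) hne
    have h1 : σ x u ∈ Vs x := (hσU x u (hWO x hx ⟨⟨huN, huA⟩, huO⟩)).1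
    have h2 : σ y u ∈ Vs y := (hσU y u (hWO y hy ⟨⟨huN, huA⟩, huO⟩)).1
    rw [show σ x u = σ y u from hxy] at h1
    exact (disjoint_left.mp hd h1) h2
  -- continuity of the local formula
  have hFcont : ContinuousOn (fun u => ∑ k ∈ T, f (σ k u)) W := by
    refine continuousOn_finset_sum T fun k hk => ?_
    have hσcont : ContinuousOn (σ k) W :=
      (e k).continuousOn_symm.mono ((hWO k hk).trans (hOsub k))
    have hdc : ContinuousOn (fun u => 𝒢.d (σ k u)) W :=
      (continuous_d 𝒢).comp_continuousOn hσcont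
    have hsd : ContinuousOn (fun u => s (𝒢.d (σ k u))) W :=
      hs_cont.comp hdc fun u _ => d_unit 𝒢 _
    have hcc : ContinuousOn (fun u => c (𝒢.d (σ k u))) W :=
      hc.comp_continuousOn hdc
    have hpair : ContinuousOn (fun u => ((σ k u, s (𝒢.d (σ k u))) : G × V)) W :=
      hσcont.prodMk hsd
    have hactc : ContinuousOn (fun u => act (σ k u) (s (𝒢.d (σ k u)))) W :=
      hact_cont.comp hpair fun u _ => hs_mem _ (d_unit 𝒢 _)
    exact hcc.smul hactc
  have hWnhds : W ∈ 𝓝 u₀ := hWopen.mem_nhds hu₀W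
  have hF : ContinuousAt (fun u => ∑ k ∈ T, f (σ k u)) u₀ :=
    hFcont.continuousAt hWnhds
  refine hF.congr ?_
  exact eventually_of_mem hWnhds fun u hu => (key u hu).symm

end TopGroupoidAux
/-- Let `G` be a proper étale Hausdorff groupoid with compact orbit
space (here: with a compactly supported cutoff function `c`), acting affinely on a
space `Y ⊆ G⁽⁰⁾ × V` with convex fibres whose anchor map (the first projection)
admits a continuous section `s`. Then `s̃(u) = Σ_{k∈G^u} c(d k)•(k·s(d k))` is a
continuous `G`-equivariant section of the anchor map, and consequently the anchor
map is a `G`-equivariant homotopy equivalence `Y ≃ G⁽⁰⁾` (via the fibrewise linear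
homotopy onto `s̃`). -/
theorem equivariant_section_and_homotopy_equivalence {G : Type u}
    [TopologicalSpace G] [T2Space G] [LocallyCompactSpace G]
    {V : Type v} [AddCommGroup V] [Module ℝ V] [TopologicalSpace V]
    [IsTopologicalAddGroup V] [ContinuousSMul ℝ V]
    (𝒢 : TopGroupoid G) (hEt : 𝒢.Etale)
    (hProper : ∀ K : Set G, K ⊆ 𝒢.units → IsCompact K →
      IsCompact (𝒢.d ⁻¹' K ∩ 𝒢.r ⁻¹' K))
    (Y : Set (G × V)) (hYanchor : ∀ y ∈ Y, y.1 ∈ 𝒢.units)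
    -- the fibres `Y_u` are convex
    (hconv : ∀ u v w, (u, v) ∈ Y → (u, w) ∈ Y → ∀ a : ℝ, 0 ≤ a → a ≤ 1 →
      (u, a • v + (1 - a) • w) ∈ Y)
    -- a continuous affine action of `G` on `Y`
    (act : G → V → V)
    (hact_mem : ∀ g v, (𝒢.d g, v) ∈ Y → (𝒢.r g, act g v) ∈ Y)
    (hact_cont : ContinuousOn (fun q : G × V => act q.1 q.2)
      {q : G × V | (𝒢.d q.1, q.2) ∈ Y})
    (hact_mul : ∀ g h v, 𝒢.Comp g h → (𝒢.d h, v) ∈ Y →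
      act (𝒢.mul g h) v = act g (act h v))
    (hact_unit : ∀ u v, u ∈ 𝒢.units → (u, v) ∈ Y → act u v = v)
    (haffine : ∀ g v w, (𝒢.d g, v) ∈ Y → (𝒢.d g, w) ∈ Y → ∀ a : ℝ, 0 ≤ a → a ≤ 1 →
      act g (a • v + (1 - a) • w) = a • act g v + (1 - a) • act g w)
    -- a compactly supported cutoff function
    (c : G → ℝ) (hc : Continuous c) (hc0 : ∀ u, 0 ≤ c u)
    (hsupp : HasCompactSupport c)
    (hsum : ∀ u ∈ 𝒢.units, ∑ᶠ k ∈ {k : G | 𝒢.r k = u}, c (𝒢.d k) = 1)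
    -- a continuous (not necessarily equivariant) section of the anchor map
    (s : G → V) (hs_cont : ContinuousOn s 𝒢.units)
    (hs_mem : ∀ u ∈ 𝒢.units, (u, s u) ∈ Y) :
    -- `s̃` is a continuous equivariant section:
    ContinuousOn (tildeS 𝒢 act c s) 𝒢.units ∧
    (∀ u ∈ 𝒢.units, (u, tildeS 𝒢 act c s u) ∈ Y) ∧
    (∀ g : G, tildeS 𝒢 act c s (𝒢.r g) = act g (tildeS 𝒢 act c s (𝒢.d g))) ∧
    -- consequently the anchor map is a `G`-equivariant homotopy equivalence,
    -- witnessed by the fibrewise linear homotopy from `id` to `s̃ ∘ p`: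
    (∃ F : ℝ × (G × V) → G × V,
      ContinuousOn F (Set.Icc (0 : ℝ) 1 ×ˢ Y) ∧
      (∀ t ∈ Set.Icc (0 : ℝ) 1, ∀ y ∈ Y, F (t, y) ∈ Y ∧ (F (t, y)).1 = y.1) ∧
      (∀ y ∈ Y, F (0, y) = y) ∧
      (∀ y ∈ Y, F (1, y) = (y.1, tildeS 𝒢 act c s y.1)) ∧
      (∀ t ∈ Set.Icc (0 : ℝ) 1, ∀ g : G, ∀ v : V, (𝒢.d g, v) ∈ Y →
        F (t, (𝒢.r g, act g v)) = (𝒢.r g, act g (F (t, (𝒢.d g, v))).2))) := by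
  have hcont := TopGroupoidAux.tildeS_continuousOn 𝒢 hEt hProper hact_cont hc hsupp
    hs_cont hs_mem
  have hmem : ∀ u ∈ 𝒢.units, (u, tildeS 𝒢 act c s u) ∈ Y := fun u hu =>
    TopGroupoidAux.tildeS_mem 𝒢 hEt hProper hconv hact_mem hc0 hsupp hsum hs_mem hu
  have hequi : ∀ g : G, tildeS 𝒢 act c s (𝒢.r g) = act g (tildeS 𝒢 act c s (𝒢.d g)) :=
    TopGroupoidAux.tildeS_equivariant 𝒢 hEt hProper hconv hact_mem hact_mul haffine
      hc0 hsupp hsum hs_mem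
  refine ⟨hcont, hmem, hequi, ?_⟩
  refine ⟨fun q => (q.2.1, (1 - q.1) • q.2.2 + q.1 • tildeS 𝒢 act c s q.2.1),
    ?_, ?_, ?_, ?_, ?_⟩
  · -- continuity of the homotopy
    refine ContinuousOn.prodMk (continuous_snd.fst.continuousOn) ?_
    refine ContinuousOn.add ?_ ?_
    · exact ((continuous_const.sub continuous_fst).smul continuous_snd.snd).continuousOn
    · refine ContinuousOn.smul continuous_fst.continuousOn ?_
      refine hcont.comp (continuous_snd.fst.continuousOn) ?_
      rintro ⟨t, y⟩ ⟨-, hq⟩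
      exact hYanchor y hq
  · rintro t ht ⟨u, v⟩ hy
    refine ⟨?_, rfl⟩
    have h := hconv u v (tildeS 𝒢 act c s u) hy (hmem u (hYanchor _ hy)) (1 - t)
      (by linarith [ht.2]) (by linarith [ht.1])
    rwa [sub_sub_cancel] at h
  · rintro ⟨u, v⟩ hy
    simp
  · rintro ⟨u, v⟩ hy
    simp
  · intro t ht g v hv
    have h := haffine g v (tildeS 𝒢 act c s (𝒢.d g)) hv
      (hmem _ (TopGroupoidAux.d_unit 𝒢 g)) (1 - t) (by linarith [ht.2]) (by linarith [ht.1])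
    rw [sub_sub_cancel] at h
    show (𝒢.r g, (1 - t) • act g v + t • tildeS 𝒢 act c s (𝒢.r g))
      = (𝒢.r g, act g ((1 - t) • v + t • tildeS 𝒢 act c s (𝒢.d g)))
    rw [h, hequi g]
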